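/- Let G_n (n ≥ 2) be the tree obtained from the ray v_0, v_1, v_2, ... by attaching the root of a complete n-ary tree of depth i to v_i for each i ≥ 1. Then G_n has no locating t-coloring for any finite t; its locating chromatic number is infinite. -/

import Mathlib

open Set

/-- The distance from a vertex `v` to the color class of color `i`. -/
noncomputable def distClass {V : Type*} (G : SimpleGraph V) {t : ℕ}
    (c : V → Fin t) (v : V) (i : Fin t) : ℕ :=
  sInf {m : ℕ | ∃ x, c x = i ∧ G.dist v x = m}

/-- A locating coloring: a proper coloring in which all vertices have
pairwise distinct color codes. -/
noncomputable def IsLocatingColoring {V : Type*} (G : SimpleGraph V) {t : ℕ}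
    (c : V → Fin t) : Prop :=
  (∀ u v, G.Adj u v → c u ≠ c v) ∧ Function.Injective (fun v => distClass G c v)

/-- Vertices of the tree `G_n`: either a ray vertex `v_i` (`Sum.inl i`),
or a vertex of the copy of the complete `n`-ary tree of depth `i` attached at `v_i`,
encoded as `(i, d, word)` with attachment index `i ≥ 1`, depth `d ≤ i`, and a word
in `Fin n` padded by `0` from position `d` on. -/
abbrev GnVertex (n : ℕ) : Type :=
  ℕ ⊕ {p : ℕ × ℕ × (ℕ → Fin n) //
        1 ≤ p.1 ∧ p.2.1 ≤ p.1 ∧ ∀ m, p.2.1 ≤ m → (p.2.2 m : ℕ) = 0}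

/-- The tree `G_n`: the ray `v_0, v_1, v_2, …` with the root of a complete
`n`-ary tree of depth `i` attached to `v_i` for each `i ≥ 1`. -/
def GnGraph (n : ℕ) : SimpleGraph (GnVertex n) :=
  SimpleGraph.fromRel (fun u v =>
    match u, v with
    | Sum.inl a, Sum.inl b => b = a + 1
    | Sum.inl a, Sum.inr q => q.1.1 = a ∧ q.1.2.1 = 0
    | Sum.inr p, Sum.inr q =>
        p.1.1 = q.1.1 ∧ q.1.2.1 = p.1.2.1 + 1 ∧
          ∀ m, m < p.1.2.1 → q.1.2.2 m = p.1.2.2 m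
    | Sum.inr _, Sum.inl _ => False)

namespace Stmt15Aux

/-- The relation generating `GnGraph`. -/
def gRel (n : ℕ) : GnVertex n → GnVertex n → Prop := fun u v =>
  match u, v with
  | Sum.inl a, Sum.inl b => b = a + 1
  | Sum.inl a, Sum.inr q => q.1.1 = a ∧ q.1.2.1 = 0
  | Sum.inr p, Sum.inr q =>
      p.1.1 = q.1.1 ∧ q.1.2.1 = p.1.2.1 + 1 ∧
        ∀ m, m < p.1.2.1 → q.1.2.2 m = p.1.2.2 m
  | Sum.inr _, Sum.inl _ => False

lemma gn_adj {n : ℕ} (u v : GnVertex n) :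
    (GnGraph n).Adj u v ↔ u ≠ v ∧ (gRel n u v ∨ gRel n v u) :=
  SimpleGraph.fromRel_adj _ u v

section
variable {n : ℕ} [NeZero n]

/-- Truncation of a word at position `e`. -/
def trunc (w : ℕ → Fin n) (e : ℕ) : ℕ → Fin n := fun m => if m < e then w m else 0

/-- Word transformation of the level-wise swap automorphism targeting copy `i`. -/
def tw (i : ℕ) (a : ℕ → Fin n) (j d : ℕ) (w : ℕ → Fin n) : ℕ → Fin n :=
  fun m => if j = i ∧ m < d then Equiv.swap 0 (a m) (w m) else w m

/-- The level-wise swap automorphism of `G_n` acting inside copy `i`. -/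
def phi (i : ℕ) (a : ℕ → Fin n) : GnVertex n → GnVertex n
  | Sum.inl k => Sum.inl k
  | Sum.inr ⟨(j, d, w), h⟩ =>
      Sum.inr ⟨(j, d, tw i a j d w), h.1, h.2.1, fun m hm => by
        have hm' : d ≤ m := hm
        have : ¬ (j = i ∧ m < d) := fun hc => absurd hc.2 (by omega)
        simp only [tw, if_neg this]
        exact h.2.2 m hm⟩

lemma phi_invol (i : ℕ) (a : ℕ → Fin n) : Function.Involutive (phi i a) := by
  rintro (k | ⟨⟨j, d, w⟩, h⟩)
  · rfl
  · simp only [phi]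
    congr 1
    apply Subtype.ext
    refine Prod.ext rfl (Prod.ext rfl ?_)
    funext m
    by_cases hc : j = i ∧ m < d <;> simp [tw, hc]

lemma phi_fix_out (i : ℕ) (a : ℕ → Fin n) (j d : ℕ) (w : ℕ → Fin n) h (hj : j ≠ i) :
    phi i a (Sum.inr ⟨(j, d, w), h⟩) = Sum.inr ⟨(j, d, w), h⟩ := by
  simp only [phi]
  congr 1
  apply Subtype.ext
  refine Prod.ext rfl (Prod.ext rfl ?_)
  funext m
  simp [tw, hj]

lemma phi_adj (i : ℕ) (a : ℕ → Fin n) {u v : GnVertex n}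
    (h : (GnGraph n).Adj u v) : (GnGraph n).Adj (phi i a u) (phi i a v) := by
  rw [gn_adj] at h ⊢
  obtain ⟨hne, hr⟩ := h
  refine ⟨fun he => hne ((phi_invol i a).injective he), ?_⟩
  have key : ∀ x y : GnVertex n, gRel n x y → gRel n (phi i a x) (phi i a y) := by
    rintro (x | ⟨⟨jx, dx, wx⟩, hx⟩) (y | ⟨⟨jy, dy, wy⟩, hy⟩) hxy
    · exact hxy
    · exact hxy
    · exact hxy.elim
    · obtain ⟨h1, h2, h3⟩ := hxy
      have h1' : jx = jy := h1
      have h2' : dy = dx + 1 := h2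
      have h3' : ∀ m, m < dx → wy m = wx m := h3
      refine ⟨h1, h2, fun m hm => ?_⟩
      have hm' : m < dx := hm
      have hmy : m < dy := by omega
      show tw i a jy dy wy m = tw i a jx dx wx m
      subst h1'
      simp only [tw]
      by_cases hc : jx = i
      · simp only [hc, true_and, if_pos hm', if_pos hmy, h3' m hm']
      · simp [hc, h3' m hm']
  rcases hr with hr | hr
  · exact Or.inl (key _ _ hr)
  · exact Or.inr (key _ _ hr)

/-- `phi` as a graph homomorphism. -/
def phiHom (i : ℕ) (a : ℕ → Fin n) : GnGraph n →g GnGraph n :=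
  ⟨phi i a, phi_adj i a⟩

@[simp] lemma phiHom_apply (i : ℕ) (a : ℕ → Fin n) (v : GnVertex n) :
    phiHom i a v = phi i a v := rfl

lemma dist_phi (i : ℕ) (a : ℕ → Fin n) (u v : GnVertex n) :
    (GnGraph n).dist (phi i a u) (phi i a v) = (GnGraph n).dist u v := by
  have key : ∀ x y : GnVertex n,
      (GnGraph n).dist (phi i a x) (phi i a y) ≤ (GnGraph n).dist x y := by
    intro x y
    by_cases hr : (GnGraph n).Reachable x y
    · obtain ⟨W, hW⟩ := hr.exists_walk_length_eq_dist
      calc (GnGraph n).dist (phi i a x) (phi i a y)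
          ≤ (W.map (phiHom i a)).length := SimpleGraph.dist_le _
        _ = W.length := SimpleGraph.Walk.length_map _ _
        _ = _ := hW
    · rw [SimpleGraph.dist_eq_zero_of_not_reachable hr,
          SimpleGraph.dist_eq_zero_of_not_reachable]
      intro hr2
      have := hr2.map (phiHom i a)
      simp only [phiHom_apply, phi_invol i a x, phi_invol i a y] at this
      exact hr this
  refine le_antisymm (key u v) ?_
  have := key (phi i a u) (phi i a v)
  rwa [phi_invol i a u, phi_invol i a v] at this

/-- The vertex at depth `e` on the path from the root of copy `i` towards word `w`. -/
def yv (i : ℕ) (hi : 1 ≤ i) (w : ℕ → Fin n) (e : ℕ) (he : e ≤ i) : GnVertex n :=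
  Sum.inr ⟨(i, e, trunc w e), hi, he, fun m hm => by
    have hm' : e ≤ m := hm
    show ((if m < e then w m else 0 : Fin n) : ℕ) = 0
    rw [if_neg (by omega : ¬ m < e)]
    simp⟩

lemma yv_zero (i : ℕ) (hi : 1 ≤ i) (w w' : ℕ → Fin n) :
    yv i hi w 0 (by omega) = yv i hi w' 0 (by omega) := by
  have h : trunc (n := n) w 0 = trunc w' 0 := by
    funext m
    simp [trunc]
  simp only [yv, h]

lemma exists_walk (i : ℕ) (hi : 1 ≤ i) (w : ℕ → Fin n) :
    ∀ e (he : e ≤ i), ∃ W : (GnGraph n).Walk (yv i hi w 0 (by omega)) (yv i hi w e he),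
      W.length = e := by
  intro e
  induction e with
  | zero => exact fun _ => ⟨SimpleGraph.Walk.nil, rfl⟩
  | succ e ih =>
    intro he
    obtain ⟨W, hW⟩ := ih (by omega)
    have hadj : (GnGraph n).Adj (yv i hi w e (by omega)) (yv i hi w (e + 1) he) := by
      rw [gn_adj]
      constructor
      · intro hEq
        simp only [yv, Sum.inr.injEq, Subtype.mk.injEq, Prod.mk.injEq] at hEq
        omega
      · refine Or.inl ⟨rfl, rfl, fun m hm => ?_⟩
        have hm' : m < e := hm
        show trunc w (e + 1) m = trunc w e m
        simp [trunc, hm', (by omega : m < e + 1)]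
    exact ⟨W.concat hadj, by rw [SimpleGraph.Walk.length_concat, hW]⟩

lemma dist_yv (i : ℕ) (hi : 1 ≤ i) (w w' : ℕ → Fin n) (e e' : ℕ) (he : e ≤ i) (he' : e' ≤ i) :
    (GnGraph n).dist (yv i hi w e he) (yv i hi w' e' he') ≤ e + e' := by
  obtain ⟨W1, hW1⟩ := exists_walk i hi w e he
  obtain ⟨W2, hW2⟩ := exists_walk i hi w' e' he'
  have h := SimpleGraph.dist_le (W1.reverse.append (W2.copy (yv_zero i hi w' w) rfl))
  simpa [SimpleGraph.Walk.length_append, SimpleGraph.Walk.length_reverse,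
    SimpleGraph.Walk.length_copy, hW1, hW2] using h

end

lemma exists_good_i (t : ℕ) : ∃ i, 1 ≤ i ∧ (2 * i + 2) ^ t < 2 ^ i := by
  refine ⟨(t + 2) ^ 3, Nat.one_le_pow _ _ (by omega), ?_⟩
  have h1 : t + 2 ≤ 2 ^ (t + 1) := by
    have := Nat.lt_two_pow_self (n := t + 1)
    omega
  have h2 : 2 * (t + 2) ^ 3 + 2 ≤ 2 ^ (3 * t + 5) := by
    have h3 : (t + 2) ^ 3 ≤ (2 ^ (t + 1)) ^ 3 := Nat.pow_le_pow_left h1 3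
    have h4 : (2 ^ (t + 1)) ^ 3 = 2 ^ (3 * t + 3) := by
      rw [← pow_mul]; ring_nf
    have h5 : (1 : ℕ) ≤ (t + 2) ^ 3 := Nat.one_le_pow _ _ (by omega)
    have : 2 ^ (3 * t + 5) = 4 * 2 ^ (3 * t + 3) := by ring
    omega
  calc (2 * (t + 2) ^ 3 + 2) ^ t ≤ (2 ^ (3 * t + 5)) ^ t := Nat.pow_le_pow_left h2 t
    _ = 2 ^ ((3 * t + 5) * t) := by rw [← pow_mul]
    _ < 2 ^ ((t + 2) ^ 3) := by
        refine Nat.pow_lt_pow_right one_lt_two ?_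
        calc (3 * t + 5) * t = 3 * t ^ 2 + 5 * t := by ring
          _ < t ^ 3 + 6 * t ^ 2 + 12 * t + 8 := by nlinarith [sq_nonneg t, Nat.zero_le (t ^ 3)]
          _ = (t + 2) ^ 3 := by ring

end Stmt15Aux

open Stmt15Aux

theorem stmt_15 (n : ℕ) (hn : 2 ≤ n) :
    ¬ ∃ (t : ℕ) (c : GnVertex n → Fin t), IsLocatingColoring (GnGraph n) c := by
  haveI : NeZero n := ⟨by omega⟩
  rintro ⟨t, c, hcol, hinj⟩
  obtain ⟨i, hi, hibd⟩ := exists_good_i t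
  set G := GnGraph n with hG
  -- the leaves of copy `i`
  let ext : (Fin i → Fin n) → (ℕ → Fin n) := fun b m => if h : m < i then b ⟨m, h⟩ else 0
  have hextpad : ∀ b m, i ≤ m → ((ext b m : Fin n) : ℕ) = 0 := by
    intro b m hm
    show ((if h : m < i then b ⟨m, h⟩ else 0 : Fin n) : ℕ) = 0
    rw [dif_neg (by omega : ¬ m < i)]
    simp
  let leaf : (Fin i → Fin n) → GnVertex n := fun b =>
    Sum.inr ⟨(i, i, ext b), hi, le_refl i, hextpad b⟩
  have hleafinj : Function.Injective leaf := by
    intro b1 b2 h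
    simp only [leaf, Sum.inr.injEq, Subtype.mk.injEq, Prod.mk.injEq] at h
    funext m
    have := congrFun h.2.2 m.1
    simpa [ext, m.2] using this
  let b0 : Fin i → Fin n := fun _ => 0
  -- `leaf b` equals `yv i hi (ext b) i`
  have hleaf_yv : ∀ b, leaf b = yv i hi (ext b) i (le_refl i) := by
    intro b
    simp only [leaf, yv]
    congr 1
    apply Subtype.ext
    refine Prod.ext rfl (Prod.ext rfl ?_)
    funext m
    by_cases hm : m < i
    · simp [trunc, hm]
    · simp [trunc, hm, ext]
  -- the "inside copy i" predicate
  let Inside : GnVertex n → Prop := fun v =>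
    ∃ q h, v = Sum.inr ⟨q, h⟩ ∧ q.1 = i
  -- distance from any leaf to an inside vertex is at most 2i
  have hdist_in : ∀ b u, Inside u → G.dist (leaf b) u ≤ 2 * i := by
    rintro b u ⟨⟨j, d, w⟩, hq, rfl, hji⟩
    have hji' : j = i := hji
    subst hji'
    have hd : d ≤ j := hq.2.1
    have hu : (Sum.inr ⟨(j, d, w), hq⟩ : GnVertex n) = yv j hi w d hd := by
      simp only [yv]
      congr 1
      apply Subtype.ext
      refine Prod.ext rfl (Prod.ext rfl ?_)
      funext m
      by_cases hm : m < d
      · show w m = if m < d then w m else 0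
        rw [if_pos hm]
      · have hq22 : ∀ m', d ≤ m' → (w m' : ℕ) = 0 := hq.2.2
        have h0 : (w m : ℕ) = 0 := hq22 m (by omega)
        show w m = if m < d then w m else 0
        rw [if_neg hm]
        exact Fin.ext (by simp [h0])
    rw [hleaf_yv b, hu]
    exact le_trans (dist_yv j hi (ext b) w j d (le_refl j) hd) (by omega)
  -- `phi i (ext b)` maps `leaf b0` to `leaf b`
  have hphi_leaf : ∀ b, phi i (ext b) (leaf b0) = leaf b := by
    intro b
    simp only [leaf, phi]
    congr 1
    apply Subtype.ext
    refine Prod.ext rfl (Prod.ext rfl ?_)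
    funext m
    by_cases hm : m < i
    · have h0 : ext b0 m = 0 := by simp [ext, b0]
      simp [tw, hm, h0, Equiv.swap_apply_left]
    · have h0 : ext b0 m = 0 := by simp [ext, hm]
      have h1 : ext b m = 0 := by simp [ext, hm]
      simp [tw, hm, h0, h1]
  -- `phi i (ext b)` fixes every outside vertex
  have hphi_fix : ∀ b u, ¬ Inside u → phi i (ext b) u = u := by
    rintro b (k | ⟨⟨j, d, w⟩, hq⟩) hu
    · rfl
    · have hj : j ≠ i := fun hji => hu ⟨(j, d, w), hq, rfl, hji⟩
      exact phi_fix_out i (ext b) j d w hq hj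
  -- distance from `leaf b` to an outside vertex equals that from `leaf b0`
  have hdist_out : ∀ b u, ¬ Inside u → G.dist (leaf b) u = G.dist (leaf b0) u := by
    intro b u hu
    have := dist_phi i (ext b) (leaf b0) u
    rwa [hphi_leaf b, hphi_fix b u hu] at this
  -- the finite set of possible code entries
  let A : Fin t → Finset ℕ := fun j =>
    insert (sInf {m | ∃ u, ¬ Inside u ∧ c u = j ∧ G.dist (leaf b0) u = m})
      (Finset.range (2 * i + 1))
  have hmem : ∀ b j, distClass G c (leaf b) j ∈ A j := by
    intro b j
    by_cases hcase : ∃ u, Inside u ∧ c u = j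
    · obtain ⟨u, hu, hcu⟩ := hcase
      have hle : distClass G c (leaf b) j ≤ 2 * i :=
        le_trans (Nat.sInf_le ⟨u, hcu, rfl⟩) (hdist_in b u hu)
      exact Finset.mem_insert.2 (Or.inr (Finset.mem_range.2 (by omega)))
    · push_neg at hcase
      have hset : {m | ∃ x, c x = j ∧ G.dist (leaf b) x = m}
          = {m | ∃ u, ¬ Inside u ∧ c u = j ∧ G.dist (leaf b0) u = m} := by
        ext m
        constructor
        · rintro ⟨x, hcx, hd⟩
          have hout : ¬ Inside x := fun hin => hcase x hin hcx
          exact ⟨x, hout, hcx, by rw [← hdist_out b x hout]; exact hd⟩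
        · rintro ⟨u, hout, hcu, hd⟩
          exact ⟨u, hcu, by rw [hdist_out b u hout]; exact hd⟩
      refine Finset.mem_insert.2 (Or.inl ?_)
      rw [distClass, hset]
  -- counting
  have hginj : Function.Injective (fun b : Fin i → Fin n => distClass G c (leaf b)) := by
    intro b1 b2 h
    exact hleafinj (hinj h)
  have hcard : (Finset.univ : Finset (Fin i → Fin n)).card ≤ (Fintype.piFinset A).card :=
    Finset.card_le_card_of_injOn (fun b : Fin i → Fin n => distClass G c (leaf b))
      (fun b _ => Fintype.mem_piFinset.2 (hmem b)) hginj.injOn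
  have h1 : (Finset.univ : Finset (Fin i → Fin n)).card = n ^ i := by
    simp [Finset.card_univ]
  have h2 : (Fintype.piFinset A).card ≤ (2 * i + 2) ^ t := by
    rw [Fintype.card_piFinset]
    calc ∏ j, (A j).card ≤ ∏ _j : Fin t, (2 * i + 2) := by
          refine Finset.prod_le_prod' ?_ <;> intro j _ <;>
          exact le_trans (Finset.card_insert_le _ _) (by simp)
      _ = (2 * i + 2) ^ t := by simp
  have h3 : 2 ^ i ≤ n ^ i := Nat.pow_le_pow_left hn i
  omega
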